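/- Let S be a finite set of s–t paths of G and let π be an s–t path of G with π ∉ S. Then there exists a weight function w : E → ℝ such that −1 ≤ len_w(x) ≤ 1 for every path x ∈ S, while len_w(π) = 1 + 1/|E| > 1. In particular, the maximum over weight functions w satisfying −1 ≤ len_w(x) ≤ 1 for all x ∈ S of the maximal value |len_w(τ)| over s–t paths τ is strictly greater than 1. -/

import Mathlib

open Finset

/-- A walk in the digraph with edge set `E`: a list of edges, each in `E`,
consecutively chained (the head of each edge is the tail of the next). -/
def IsWalk {V : Type*} (E : Finset (V × V)) (p : List (V × V)) : Prop :=
  (∀ e ∈ p, e ∈ E) ∧ p.Chain' (fun a b => a.2 = b.1)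

/-- An s–t path: a nonempty walk starting at `s` and ending at `t`. -/
def IsSTPath {V : Type*} (E : Finset (V × V)) (s t : V) (p : List (V × V)) : Prop :=
  p ≠ [] ∧ IsWalk E p ∧ p.head?.map Prod.fst = some s ∧
    p.getLast?.map Prod.snd = some t

/-- The digraph with edge set `E` is acyclic: no nonempty walk returns to its
starting vertex. -/
def IsDAG {V : Type*} (E : Finset (V × V)) : Prop :=
  ∀ p : List (V × V), p ≠ [] → IsWalk E p →
    p.head?.map Prod.fst ≠ p.getLast?.map Prod.snd

/-- The length of a path under the weight function `w`: the sum of the weights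
of the edges in the path's edge set. -/
noncomputable def pathLen {V : Type*} [DecidableEq V] (w : V × V → ℝ)
    (p : List (V × V)) : ℝ :=
  ∑ e ∈ p.toFinset, w e

/-- Theorem 2 of the paper: if S is a finite set of s-t paths and
the s-t path pi is not in S, then some weight function gives every path of S a
length in [-1, 1] while pi gets length 1 + 1/|E| > 1.  In particular the optimal
value of Problem 4 is strictly greater than 1. -/
lemma walk_tail_fst_ne {V : Type*} {E : Finset (V × V)}
    (hDAG : IsDAG E) {a : V × V} {p : List (V × V)}
    (hw : IsWalk E (a :: p)) {e : V × V} (he : e ∈ p) : e.1 ≠ a.1 := by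
  intro h
  obtain ⟨u, v, rfl⟩ := List.append_of_mem he
  have hchain := hw.2
  rw [show a :: (u ++ e :: v) = (a :: u) ++ (e :: v) by simp] at hchain
  rw [List.Chain', List.isChain_append] at hchain
  obtain ⟨h1, h2, h3⟩ := hchain
  have hlast : ((a :: u).getLast (by simp)).2 = e.1 := by
    apply h3
    · simp [List.getLast?_eq_getLast (l := a :: u) (by simp)]
    · rfl
  refine hDAG (a :: u) (by simp) ⟨fun x hx => hw.1 x ?_, h1⟩ ?_
  · rcases List.mem_cons.mp hx with rfl | hx
    · exact List.mem_cons_self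
    · exact List.mem_cons_of_mem _ (by simp [hx])
  · rw [List.getLast?_eq_getLast (l := a :: u) (by simp)]
    simp [hlast, h]

lemma tail_path {V : Type*} {E : Finset (V × V)} {s t : V} {a : V × V}
    {p' : List (V × V)} (h : IsSTPath E s t (a :: p')) (hne : p' ≠ []) :
    IsSTPath E a.2 t p' := by
  obtain ⟨c, p'', rfl⟩ := List.exists_cons_of_ne_nil hne
  obtain ⟨-, ⟨hE, hch⟩, -, hl⟩ := h
  rw [List.Chain', List.isChain_cons_cons] at hch
  refine ⟨by simp, ⟨fun e he => hE e (List.mem_cons_of_mem _ he), hch.2⟩,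
    by simp [hch.1], ?_⟩
  rwa [List.getLast?_cons_cons] at hl

lemma path_tail_nil {V : Type*} {E : Finset (V × V)} (hDAG : IsDAG E)
    {s t : V} {a : V × V} {p' : List (V × V)}
    (h : IsSTPath E s t (a :: p')) (hat : a.2 = t) : p' = [] := by
  by_contra hne
  have h' := tail_path h hne
  exact hDAG p' hne h'.2.1 (by rw [h'.2.2.1, h'.2.2.2, hat])

lemma path_subset_eq {V : Type*} {E : Finset (V × V)}
    (hDAG : IsDAG E) (t : V) :
    ∀ (p : List (V × V)) (s : V) (q : List (V × V)),
      IsSTPath E s t p → IsSTPath E s t q → (∀ e ∈ p, e ∈ q) → p = q := by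
  intro p
  induction p with
  | nil => intro s q hp; exact absurd rfl hp.1
  | cons a p' ih =>
    intro s q hp hq hsub
    obtain ⟨b, q', rfl⟩ := List.exists_cons_of_ne_nil hq.1
    have ha1 : a.1 = s := by
      have := hp.2.2.1; simpa using this
    have hb1 : b.1 = s := by
      have := hq.2.2.1; simpa using this
    have hab : a = b := by
      rcases List.mem_cons.mp (hsub a List.mem_cons_self) with h | h
      · exact h
      · exact absurd (ha1.trans hb1.symm) (walk_tail_fst_ne hDAG hq.2.1 h)
    subst hab
    rcases eq_or_ne p' [] with rfl | hp'ne
    · have hat : a.2 = t := by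
        have := hp.2.2.2; simpa using this
      rw [path_tail_nil hDAG hq hat]
    · have hq'ne : q' ≠ [] := by
        intro hq'
        subst hq'
        have hat : a.2 = t := by
          have := hq.2.2.2; simpa using this
        exact hp'ne (path_tail_nil hDAG hp hat)
      have hsub' : ∀ e ∈ p', e ∈ q' := by
        intro e he
        rcases List.mem_cons.mp (hsub e (List.mem_cons_of_mem _ he)) with rfl | h
        · exact absurd rfl (walk_tail_fst_ne hDAG hp.2.1 he)
        · exact h
      rw [ih a.2 q' (tail_path hp hp'ne) (tail_path hq hq'ne) hsub']

theorem stmt3 {V : Type*} [Fintype V] [DecidableEq V]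
    (E : Finset (V × V)) (s t : V) (hDAG : IsDAG E)
    (S : Finset (List (V × V))) (hS : ∀ x ∈ S, IsSTPath E s t x)
    (π : List (V × V)) (hπ : IsSTPath E s t π) (hπS : π ∉ S) :
    (∃ w : V × V → ℝ,
      (∀ x ∈ S, -1 ≤ pathLen w x ∧ pathLen w x ≤ 1) ∧
      pathLen w π = 1 + 1 / (E.card : ℝ) ∧ 1 < pathLen w π) ∧
    (∃ (w : V × V → ℝ) (τ : List (V × V)),
      (∀ x ∈ S, -1 ≤ pathLen w x ∧ pathLen w x ≤ 1) ∧
      IsSTPath E s t τ ∧ 1 < |pathLen w τ|) := by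
  set k := π.toFinset.card with hk
  set m := E.card with hm
  have hπsub : π.toFinset ⊆ E := fun e he => hπ.2.1.1 e (List.mem_toFinset.mp he)
  have hk1 : 1 ≤ k := by
    rcases List.exists_cons_of_ne_nil hπ.1 with ⟨a, p', rfl⟩
    exact Finset.card_pos.mpr ⟨a, by simp⟩
  have hkm : k ≤ m := Finset.card_le_card hπsub
  have hm1 : 1 ≤ m := le_trans hk1 hkm
  have hK0 : (0:ℝ) < k := by exact_mod_cast hk1
  have hM0 : (0:ℝ) < m := by exact_mod_cast lt_of_lt_of_le one_pos hm1
  set a : ℝ := (1 + 1/(m:ℝ)) / k with ha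
  have ha0 : 0 ≤ a := by positivity
  set w : V × V → ℝ := fun e => if e ∈ π.toFinset then a else 0 with hw
  have hlenπ : pathLen w π = 1 + 1/(m:ℝ) := by
    rw [pathLen]
    rw [Finset.sum_congr rfl (fun e he => if_pos he)]
    rw [Finset.sum_const, nsmul_eq_mul, ha, mul_comm,
      div_mul_cancel₀ _ (ne_of_gt hK0)]
  have hbig : 1 < pathLen w π := by
    rw [hlenπ]
    have : 0 < 1/(m:ℝ) := by positivity
    linarith
  have hbnd : ∀ x ∈ S, -1 ≤ pathLen w x ∧ pathLen w x ≤ 1 := by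
    intro x hx
    have hlenx : pathLen w x = ((x.toFinset ∩ π.toFinset).card : ℝ) * a := by
      rw [pathLen, hw]
      rw [Finset.sum_ite_mem, Finset.sum_const, nsmul_eq_mul]
    set c := (x.toFinset ∩ π.toFinset).card with hc
    have hclt : c < k := by
      refine lt_of_le_of_ne (Finset.card_le_card (Finset.inter_subset_right)) ?_
      intro hceq
      have hinter : x.toFinset ∩ π.toFinset = π.toFinset :=
        Finset.eq_of_subset_of_card_le Finset.inter_subset_right
          (le_of_eq hceq.symm)
      have hsubset : π.toFinset ⊆ x.toFinset :=
        hinter ▸ Finset.inter_subset_left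
      have : π = x := path_subset_eq hDAG t π s x hπ (hS x hx)
        (fun e he => List.mem_toFinset.mp (hsubset (List.mem_toFinset.mpr he)))
      exact hπS (this ▸ hx)
    have hcK : (c:ℝ) ≤ (k:ℝ) - 1 := by
      have : (c:ℝ) + 1 ≤ (k:ℝ) := by exact_mod_cast hclt
      linarith
    have hKM : (k:ℝ) ≤ (m:ℝ) := by exact_mod_cast hkm
    constructor
    · rw [hlenx]
      have h0 : (0:ℝ) ≤ (c:ℝ) * a := mul_nonneg (Nat.cast_nonneg c) ha0
      linarith
    · rw [hlenx, ha]
      rw [show (1 + 1/(m:ℝ)) = ((m:ℝ)+1)/m by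
        rw [add_div, div_self (ne_of_gt hM0)], div_div, mul_div_assoc']
      rw [div_le_one (mul_pos hM0 hK0)]
      nlinarith [mul_le_mul_of_nonneg_right hcK (show (0:ℝ) ≤ (m:ℝ)+1 by linarith)]
  refine ⟨⟨w, hbnd, hlenπ, hbig⟩, ⟨w, π, hbnd, hπ, ?_⟩⟩
  rw [abs_of_pos (lt_trans one_pos hbig)]
  exact hbig
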